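/- Beurling subfamilies compute modulus: if Γ̃ ⊆ Γ is a Beurling subfamily for the extremal density ρ₀ of Γ, then Mod(Γ̃) = Mod(Γ). -/

import Mathlib

open scoped ENNReal

variable {V : Type*} [DecidableEq V] {G : SimpleGraph V} [Fintype G.edgeSet]

/-- A walk in `G` with arbitrary endpoints. -/
abbrev GWalk (G : SimpleGraph V) : Type _ := Σ u : V, Σ v : V, G.Walk u v

/-- The `ρ`-length of a walk: sum of `ρ` over traversed edges with multiplicity. -/
def wlen (ρ : G.edgeSet → ℝ) (γ : GWalk G) : ℝ :=
  ∑ e : G.edgeSet, (γ.2.2.edges.count (e : Sym2 V) : ℝ) * ρ e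

/-- Admissible densities for a family of walks. -/
def Adm (Γ : Set (GWalk G)) : Set (G.edgeSet → ℝ) :=
  {ρ | (∀ e, 0 ≤ ρ e) ∧ ∀ γ ∈ Γ, 1 ≤ wlen ρ γ}

/-- The energy of a density. -/
def energy (G : SimpleGraph V) [Fintype G.edgeSet] (ρ : G.edgeSet → ℝ) : ℝ :=
  ∑ e, ρ e ^ 2

/-- The modulus of a family of walks. -/
noncomputable def GMod (Γ : Set (GWalk G)) : ℝ≥0∞ :=
  sInf ((fun ρ => ENNReal.ofReal (energy G ρ)) '' Adm Γ)

theorem beurling_subfamily_modulus (Γ Γt : Set (GWalk G)) (ρ₀ : G.edgeSet → ℝ)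
    (hρ₀ : ρ₀ ∈ Adm Γ) (hext : ENNReal.ofReal (energy G ρ₀) = GMod Γ)
    (hsub : Γt ⊆ Γ) (hone : ∀ γ ∈ Γt, wlen ρ₀ γ = 1)
    (hcrit : ∀ h : G.edgeSet → ℝ, (∀ γ ∈ Γt, 0 ≤ wlen h γ) → 0 ≤ ∑ e, h e * ρ₀ e) :
    GMod Γt = GMod Γ := by
  apply le_antisymm
  · refine sInf_le_sInf (Set.image_mono ?_)
    intro ρ hρ
    exact ⟨hρ.1, fun γ hγ => hρ.2 γ (hsub hγ)⟩
  · rw [← hext]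
    refine le_sInf ?_
    rintro x ⟨ρ, hρ, rfl⟩
    apply ENNReal.ofReal_le_ofReal
    -- key: energy ρ₀ ≤ energy ρ
    have hsum : 0 ≤ ∑ e, (ρ e - ρ₀ e) * ρ₀ e := by
      apply hcrit
      intro γ hγ
      have h1 : wlen (fun e => ρ e - ρ₀ e) γ = wlen ρ γ - wlen ρ₀ γ := by
        simp [wlen, mul_sub, Finset.sum_sub_distrib]
      rw [h1, hone γ hγ]
      linarith [hρ.2 γ hγ]
    have key : ∀ e : G.edgeSet, ρ₀ e ^ 2 ≤ ρ e ^ 2 - 2 * ((ρ e - ρ₀ e) * ρ₀ e) := by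
      intro e; nlinarith [sq_nonneg (ρ e - ρ₀ e)]
    calc energy G ρ₀ ≤ ∑ e, (ρ e ^ 2 - 2 * ((ρ e - ρ₀ e) * ρ₀ e)) :=
          Finset.sum_le_sum (fun e _ => key e)
      _ = energy G ρ - 2 * ∑ e, (ρ e - ρ₀ e) * ρ₀ e := by
          rw [Finset.sum_sub_distrib, ← Finset.mul_sum]; rfl
      _ ≤ energy G ρ := by linarith
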